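/- If $\sum_i E_i X E_i^* = \sum_j F_j X F_j^*$ for all $X \in \mathcal{B}(V)$, where $V$ is finite dimensional, then the linear spans of $\{E_i\}$ and $\{F_j\}$ in $\mathcal{B}(V)$ coincide. -/

import Mathlib

open Matrix

open scoped InnerProductSpace ComplexConjugate

noncomputable def vecEquiv (n : ℕ) :
    Matrix (Fin n) (Fin n) ℂ ≃ₗ[ℂ] EuclideanSpace ℂ (Fin n × Fin n) :=
  (LinearEquiv.curry ℂ ℂ (Fin n) (Fin n)).symm.trans
    (WithLp.linearEquiv 2 ℂ (Fin n × Fin n → ℂ)).symm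

lemma vecEquiv_apply {n : ℕ} (A : Matrix (Fin n) (Fin n) ℂ) (pq : Fin n × Fin n) :
    vecEquiv n A pq = A pq.1 pq.2 := rfl

lemma inner_vecEquiv {n : ℕ} (A X : Matrix (Fin n) (Fin n) ℂ) :
    ⟪vecEquiv n A, vecEquiv n X⟫_ℂ
      = ∑ pq : Fin n × Fin n, conj (A pq.1 pq.2) * X pq.1 pq.2 := by
  simp [PiLp.inner_apply, vecEquiv_apply, RCLike.inner_apply]
  exact Finset.sum_congr rfl fun _ _ => mul_comm _ _

lemma mem_orthogonal_span_range_iff {ι : Type*} {I : Type*} [Fintype I] [DecidableEq I]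
    (v : ι → EuclideanSpace ℂ I) (x : EuclideanSpace ℂ I) :
    x ∈ (Submodule.span ℂ (Set.range v))ᗮ ↔ ∀ i, ⟪v i, x⟫_ℂ = 0 := by
  rw [Submodule.mem_orthogonal]
  constructor
  · exact fun H i => H (v i) (Submodule.subset_span (Set.mem_range_self i))
  · intro H u hu
    induction hu using Submodule.span_induction with
    | mem u hu => obtain ⟨i, rfl⟩ := hu; exact H i
    | zero => simp
    | add a b _ _ ha hb => rw [inner_add_left, ha, hb, add_zero]
    | smul c a _ ha => rw [inner_smul_left, ha, mul_zero]

lemma inner_zero_of_inner_sq_eq {ι κ : Type*} [Fintype ι] [Fintype κ] {I : Type*}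
    [Fintype I] [DecidableEq I]
    (v : ι → EuclideanSpace ℂ I) (w : κ → EuclideanSpace ℂ I)
    (h : ∀ x : EuclideanSpace ℂ I,
      ∑ i, ⟪v i, x⟫_ℂ * conj ⟪v i, x⟫_ℂ = ∑ j, ⟪w j, x⟫_ℂ * conj ⟪w j, x⟫_ℂ)
    (x : EuclideanSpace ℂ I) (hx : ∀ j, ⟪w j, x⟫_ℂ = 0) : ∀ i, ⟪v i, x⟫_ℂ = 0 := by
  have h0 : ∑ i, ⟪v i, x⟫_ℂ * conj ⟪v i, x⟫_ℂ = 0 := by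
    rw [h x]; exact Finset.sum_eq_zero fun j _ => by rw [hx j, map_zero, mul_zero]
  have h1 : ∑ i, (Complex.normSq ⟪v i, x⟫_ℂ : ℝ) = 0 := by
    have : ((∑ i, (Complex.normSq ⟪v i, x⟫_ℂ : ℝ) : ℝ) : ℂ) = 0 := by
      push_cast
      rw [← h0]
      exact Finset.sum_congr rfl fun i _ => (Complex.mul_conj _).symm
    exact_mod_cast this
  have h2 := (Finset.sum_eq_zero_iff_of_nonneg
    (fun i _ => Complex.normSq_nonneg _)).mp h1
  intro i
  exact Complex.normSq_eq_zero.mp (h2 i (Finset.mem_univ i))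

lemma span_eq_of_inner_sq {ι κ : Type*} [Fintype ι] [Fintype κ] {I : Type*}
    [Fintype I] [DecidableEq I]
    (v : ι → EuclideanSpace ℂ I) (w : κ → EuclideanSpace ℂ I)
    (h : ∀ x : EuclideanSpace ℂ I,
      ∑ i, ⟪v i, x⟫_ℂ * conj ⟪v i, x⟫_ℂ = ∑ j, ⟪w j, x⟫_ℂ * conj ⟪w j, x⟫_ℂ) :
    Submodule.span ℂ (Set.range v) = Submodule.span ℂ (Set.range w) := by
  have key : ∀ x : EuclideanSpace ℂ I,
      (∀ i, ⟪v i, x⟫_ℂ = 0) ↔ (∀ j, ⟪w j, x⟫_ℂ = 0) := fun x =>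
    ⟨fun hx => inner_zero_of_inner_sq_eq w v (fun x => (h x).symm) x hx,
     fun hx => inner_zero_of_inner_sq_eq v w h x hx⟩
  have horth : (Submodule.span ℂ (Set.range v))ᗮ = (Submodule.span ℂ (Set.range w))ᗮ := by
    ext x
    rw [mem_orthogonal_span_range_iff, mem_orthogonal_span_range_iff]
    exact key x
  calc Submodule.span ℂ (Set.range v)
      = (Submodule.span ℂ (Set.range v))ᗮᗮ := (Submodule.orthogonal_orthogonal _).symm
    _ = (Submodule.span ℂ (Set.range w))ᗮᗮ := by rw [horth]
    _ = Submodule.span ℂ (Set.range w) := Submodule.orthogonal_orthogonal _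

lemma kraus_entry {n m : ℕ} (E : Fin m → Matrix (Fin n) (Fin n) ℂ)
    (p q r s : Fin n) (i : Fin m) :
    (E i * (Matrix.single q s 1 : Matrix (Fin n) (Fin n) ℂ) * (E i)ᴴ) p r = E i p q * conj (E i r s) := by
  rw [Matrix.mul_apply]
  rw [Finset.sum_eq_single s]
  · rw [Matrix.mul_single_apply_same, conjTranspose_apply, mul_one]
    rfl
  · intro b _ hb
    rw [Matrix.mul_single_apply_of_ne _ _ _ _ _ hb, zero_mul]
  · intro hs; exact absurd (Finset.mem_univ s) hs

lemma expand_sum {n : ℕ} {ι : Type*} [Fintype ι] (A : ι → Matrix (Fin n) (Fin n) ℂ)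
    (X : Matrix (Fin n) (Fin n) ℂ) :
    ∑ i, ⟪vecEquiv n (A i), vecEquiv n X⟫_ℂ * conj ⟪vecEquiv n (A i), vecEquiv n X⟫_ℂ
      = ∑ pq : Fin n × Fin n, ∑ rs : Fin n × Fin n,
          (X pq.1 pq.2 * conj (X rs.1 rs.2)) *
            ∑ i, A i rs.1 rs.2 * conj (A i pq.1 pq.2) := by
  have step : ∀ i : ι,
      ⟪vecEquiv n (A i), vecEquiv n X⟫_ℂ * conj ⟪vecEquiv n (A i), vecEquiv n X⟫_ℂ
        = ∑ pq : Fin n × Fin n, ∑ rs : Fin n × Fin n,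
            (X pq.1 pq.2 * conj (X rs.1 rs.2)) *
              (A i rs.1 rs.2 * conj (A i pq.1 pq.2)) := by
    intro i
    rw [inner_vecEquiv, map_sum, Finset.sum_mul_sum]
    refine Finset.sum_congr rfl fun pq _ => Finset.sum_congr rfl fun rs _ => ?_
    simp only [_root_.map_mul, RingHomInvPair.comp_apply_eq, Complex.conj_conj]
    ring
  rw [Finset.sum_congr rfl fun i _ => step i, Finset.sum_comm]
  refine Finset.sum_congr rfl fun pq _ => ?_
  rw [Finset.sum_comm]
  exact Finset.sum_congr rfl fun rs _ => (Finset.mul_sum _ _ _).symm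

/-- If two superoperators given by Kraus families agree on all of B(V),
then the linear spans of the Kraus operators coincide. -/
theorem stmt0 {n m k : ℕ} (E : Fin m → Matrix (Fin n) (Fin n) ℂ)
    (F : Fin k → Matrix (Fin n) (Fin n) ℂ)
    (h : ∀ X : Matrix (Fin n) (Fin n) ℂ,
      ∑ i, E i * X * (E i)ᴴ = ∑ j, F j * X * (F j)ᴴ) :
    Submodule.span ℂ (Set.range E) = Submodule.span ℂ (Set.range F) := by
  -- key Choi-matrix identity
  have key : ∀ p q r s : Fin n,
      ∑ i, E i p q * conj (E i r s) = ∑ j, F j p q * conj (F j r s) := by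
    intro p q r s
    have := congrFun (congrFun (h (Matrix.single q s 1)) p) r
    simpa [Matrix.sum_apply, kraus_entry] using this
  set e := vecEquiv n with he
  have hsum : ∀ x : EuclideanSpace ℂ (Fin n × Fin n),
      ∑ i, ⟪e (E i), x⟫_ℂ * conj ⟪e (E i), x⟫_ℂ
        = ∑ j, ⟪e (F j), x⟫_ℂ * conj ⟪e (F j), x⟫_ℂ := by
    intro x
    obtain ⟨X, rfl⟩ : ∃ X, x = e X := ⟨e.symm x, (e.apply_symm_apply x).symm⟩
    rw [expand_sum E X, expand_sum F X]
    refine Finset.sum_congr rfl fun pq _ => Finset.sum_congr rfl fun rs _ => ?_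
    rw [key rs.1 rs.2 pq.1 pq.2]
  have := span_eq_of_inner_sq (fun i => e (E i)) (fun j => e (F j)) hsum
  have hE : Submodule.map (e : Matrix (Fin n) (Fin n) ℂ →ₗ[ℂ] _)
      (Submodule.span ℂ (Set.range E)) = Submodule.span ℂ (Set.range fun i => e (E i)) := by
    rw [Submodule.map_span, ← Set.range_comp]; rfl
  have hF : Submodule.map (e : Matrix (Fin n) (Fin n) ℂ →ₗ[ℂ] _)
      (Submodule.span ℂ (Set.range F)) = Submodule.span ℂ (Set.range fun j => e (F j)) := by
    rw [Submodule.map_span, ← Set.range_comp]; rfl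
  apply Submodule.map_injective_of_injective (f := (e : Matrix (Fin n) (Fin n) ℂ →ₗ[ℂ] _))
    (by exact e.injective)
  rw [hE, hF, this]
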